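/- Let d be an invertible n×n real matrix such that 1ᵀd⁻¹1 ≠ 0. For t > 0 small let w(t) solve exp[−td] w(t) = 1, where exp[−td] is the entrywise exponential. Then w(t) has a well-defined limit as t ↓ 0, namely lim_{t↓0} w(t) = d⁻¹1 / (1ᵀd⁻¹1). -/

import Mathlib

open Matrix Filter

section helpers
variable {m : Type*} [Fintype m] (M : Matrix m m ℝ) (u v x y w : m → ℝ)

lemma myl1 : vecMulVec u v *ᵥ w = (v ⬝ᵥ w) • u := by
  ext i
  simp [vecMulVec, mulVec, dotProduct, Finset.mul_sum, mul_comm, mul_left_comm]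

lemma myl3 : vecMulVec u v * M = vecMulVec u (v ᵥ* M) := by
  ext i j
  simp [vecMulVec, vecMul, Matrix.mul_apply, dotProduct, Finset.mul_sum, mul_assoc]

lemma myl4 : vecMulVec u v * vecMulVec x y = (v ⬝ᵥ x) • vecMulVec u y := by
  rw [myl3]
  ext i j
  rw [vecMulVec_apply]
  simp only [vecMul, vecMulVec_apply, Matrix.smul_apply, smul_eq_mul, dotProduct]
  rw [Finset.sum_mul]
  ring_nf
  simp [Finset.mul_sum]
  ring_nf
  congr 1; ext k; ring

end helpers

section key
variable {m : Type*} [Fintype m] [DecidableEq m]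

/-- Sherman–Morrison style right-inverse identity. -/
lemma key_mul (N : Matrix m m ℝ) (hN : IsUnit N.det) (t : ℝ) (ht : t ≠ 0)
    (hc : t + ((fun _ => (1:ℝ)) ⬝ᵥ (N⁻¹ *ᵥ fun _ => 1)) ≠ 0) :
    (vecMulVec (fun _ => (1:ℝ)) (fun _ => 1) + t • N) *
      (t⁻¹ • (N⁻¹ - (t + ((fun _ => (1:ℝ)) ⬝ᵥ (N⁻¹ *ᵥ fun _ => 1)))⁻¹ •
        (N⁻¹ * vecMulVec (fun _ => (1:ℝ)) (fun _ => 1) * N⁻¹))) = 1 := by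
  set c : ℝ := (fun _ => (1:ℝ)) ⬝ᵥ (N⁻¹ *ᵥ fun _ => 1) with hcdef
  set P : Matrix m m ℝ := vecMulVec (fun _ => (1:ℝ)) (fun _ => 1) with hP
  have h1 : N * N⁻¹ = 1 := mul_nonsing_inv _ hN
  have hPNiP : P * N⁻¹ * P = c • P := by
    rw [hP, myl3, myl4]
    congr 1
    rw [hcdef, dotProduct_mulVec]
  have e1 : (P + t • N) * N⁻¹ = P * N⁻¹ + t • (1 : Matrix m m ℝ) := by
    rw [Matrix.add_mul, Matrix.smul_mul, h1]
  have e2 : (P + t • N) * (N⁻¹ * P * N⁻¹) = c • (P * N⁻¹) + t • (P * N⁻¹) := by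
    rw [Matrix.add_mul, Matrix.smul_mul]
    congr 1
    · calc P * (N⁻¹ * P * N⁻¹) = P * N⁻¹ * P * N⁻¹ := by
            rw [Matrix.mul_assoc, Matrix.mul_assoc, Matrix.mul_assoc]
        _ = (c • P) * N⁻¹ := by rw [hPNiP]
        _ = c • (P * N⁻¹) := by rw [Matrix.smul_mul]
    · congr 1
      calc N * (N⁻¹ * P * N⁻¹) = (N * N⁻¹) * (P * N⁻¹) := by
            rw [Matrix.mul_assoc, Matrix.mul_assoc]
        _ = P * N⁻¹ := by rw [h1, Matrix.one_mul]
  rw [Matrix.mul_smul, Matrix.mul_sub, Matrix.mul_smul, e1, e2]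
  match_scalars <;> · field_simp; try ring

lemma key_vec (N : Matrix m m ℝ) (hN : IsUnit N.det) (t : ℝ) (ht : t ≠ 0)
    (hc : t + ((fun _ => (1:ℝ)) ⬝ᵥ (N⁻¹ *ᵥ fun _ => 1)) ≠ 0) :
    (t⁻¹ • (N⁻¹ - (t + ((fun _ => (1:ℝ)) ⬝ᵥ (N⁻¹ *ᵥ fun _ => 1)))⁻¹ •
        (N⁻¹ * vecMulVec (fun _ => (1:ℝ)) (fun _ => 1) * N⁻¹))) *ᵥ (fun _ => (1:ℝ)) =
      (t + ((fun _ => (1:ℝ)) ⬝ᵥ (N⁻¹ *ᵥ fun _ => 1)))⁻¹ • (N⁻¹ *ᵥ fun _ => 1) := by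
  set c : ℝ := (fun _ => (1:ℝ)) ⬝ᵥ (N⁻¹ *ᵥ fun _ => 1) with hcdef
  set P : Matrix m m ℝ := vecMulVec (fun _ => (1:ℝ)) (fun _ => 1) with hP
  have hQ : (N⁻¹ * P * N⁻¹) *ᵥ (fun _ => (1:ℝ)) = c • (N⁻¹ *ᵥ fun _ => 1) := by
    rw [← Matrix.mulVec_mulVec, ← Matrix.mulVec_mulVec, hP, myl1, ← hcdef,
      Matrix.mulVec_smul]
  rw [smul_mulVec, Matrix.sub_mulVec, smul_mulVec, hQ]
  rw [smul_smul]
  match_scalars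
  field_simp
  ring

end key

theorem stmt7 {n : ℕ} (d : Matrix (Fin n) (Fin n) ℝ) (hd : IsUnit d.det)
    (hsum : (fun _ => (1 : ℝ)) ⬝ᵥ (d⁻¹ *ᵥ fun _ => 1) ≠ 0) :
    (∃ ε > 0, ∀ t : ℝ, 0 < t → t < ε →
        IsUnit (Matrix.of fun j k => Real.exp (-t * d j k)).det) ∧
      Tendsto (fun t : ℝ => (Matrix.of fun j k => Real.exp (-t * d j k))⁻¹ *ᵥ fun _ => 1)
        (nhdsWithin 0 (Set.Ioi 0))
        (nhds (((fun _ => (1 : ℝ)) ⬝ᵥ (d⁻¹ *ᵥ fun _ => 1))⁻¹ • (d⁻¹ *ᵥ fun _ => 1))) := by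
  set l : Filter ℝ := nhdsWithin 0 (Set.Ioi 0) with hl
  set A : ℝ → Matrix (Fin n) (Fin n) ℝ :=
    fun t => Matrix.of fun j k => (Real.exp (-t * d j k) - 1) / t with hAdef
  -- A tends to -d
  have hA : Tendsto A l (nhds (-d)) := by
    apply tendsto_pi_nhds.mpr
    intro j
    apply tendsto_pi_nhds.mpr
    intro k
    set x : ℝ := d j k
    have hder : HasDerivAt (fun t : ℝ => Real.exp (-t * x)) (-x) 0 := by
      have h1 : HasDerivAt (fun t : ℝ => -t * x) (-x) 0 := by
        simpa using ((hasDerivAt_id (0:ℝ)).neg.mul_const x)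
      have h2 := (Real.hasDerivAt_exp ((-0) * x)).comp 0 h1
      simpa [Function.comp_def] using h2
    have hslope := hasDerivAt_iff_tendsto_slope.mp hder
    have hmono : l ≤ nhdsWithin (0:ℝ) {(0:ℝ)}ᶜ :=
      nhdsWithin_mono 0 (fun y hy => ne_of_gt hy)
    have := hslope.mono_left hmono
    refine this.congr fun t => ?_
    simp [slope_def_field, A, x]
  -- inverse of A tends to (-d)⁻¹ = -(d⁻¹)
  have hdetneg : (-d).det ≠ 0 := by
    rw [Matrix.det_neg]
    exact mul_ne_zero (by simp) hd.ne_zero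
  have hAinv : Tendsto (fun t => (A t)⁻¹) l (nhds (-d)⁻¹) := by
    have hcont : ContinuousAt Inv.inv (-d) := by
      apply continuousAt_matrix_inv
      rw [show (Ring.inverse : ℝ → ℝ) = Inv.inv from funext fun x => Ring.inverse_eq_inv x]
      exact continuousAt_inv₀ hdetneg
    exact hcont.tendsto.comp hA
  have hneg : (-d)⁻¹ = -(d⁻¹) := by
    apply Matrix.inv_eq_right_inv
    rw [neg_mul_neg]
    exact Matrix.mul_nonsing_inv _ hd
  -- c t tends to -S
  set S : ℝ := (fun _ => (1 : ℝ)) ⬝ᵥ (d⁻¹ *ᵥ fun _ => 1) with hS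
  set c : ℝ → ℝ := fun t => (fun _ => (1:ℝ)) ⬝ᵥ ((A t)⁻¹ *ᵥ fun _ => 1) with hcdef
  have hg : Continuous fun M : Matrix (Fin n) (Fin n) ℝ => (fun _ => (1:ℝ)) ⬝ᵥ (M *ᵥ fun _ => 1) :=
    continuous_const.dotProduct (continuous_id.matrix_mulVec continuous_const)
  have hc : Tendsto c l (nhds (-S)) := by
    have := hg.continuousAt.tendsto.comp hAinv
    rw [hneg] at this
    simpa [hS, Matrix.neg_mulVec, c, Function.comp_def] using this
  -- t + c t tends to -S ≠ 0
  have htid : Tendsto (fun t : ℝ => t) l (nhds 0) := tendsto_id.mono_right nhdsWithin_le_nhds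
  have htc : Tendsto (fun t => t + c t) l (nhds (-S)) := by
    simpa using htid.add hc
  have hSne : -S ≠ 0 := neg_ne_zero.mpr hsum
  -- eventual facts
  have hdetA : Tendsto (fun t => (A t).det) l (nhds (-d).det) :=
    (continuous_id.matrix_det.continuousAt).tendsto.comp hA
  have ev1 : ∀ᶠ t in l, (A t).det ≠ 0 := hdetA.eventually_ne hdetneg
  have ev2 : ∀ᶠ t in l, t + c t ≠ 0 := htc.eventually_ne hSne
  have ev3 : ∀ᶠ t in l, t ∈ Set.Ioi (0:ℝ) := eventually_mem_nhdsWithin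
  have evkey : ∀ᶠ t in l,
      (Matrix.of fun j k => Real.exp (-t * d j k)) *
        (t⁻¹ • ((A t)⁻¹ - (t + c t)⁻¹ •
          ((A t)⁻¹ * vecMulVec (fun _ => (1:ℝ)) (fun _ => 1) * (A t)⁻¹))) = 1 ∧
      (Matrix.of fun j k => Real.exp (-t * d j k))⁻¹ *ᵥ (fun _ => (1:ℝ)) =
        (t + c t)⁻¹ • ((A t)⁻¹ *ᵥ fun _ => 1) := by
    filter_upwards [ev1, ev2, ev3] with t h1 h2 h3
    have ht : (0:ℝ) < t := h3
    have htne : t ≠ 0 := ne_of_gt ht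
    have hE : (Matrix.of fun j k => Real.exp (-t * d j k)) =
        vecMulVec (fun _ => (1:ℝ)) (fun _ => 1) + t • A t := by
      ext j k
      simp only [Matrix.of_apply, Matrix.add_apply, Matrix.smul_apply, vecMulVec_apply,
        smul_eq_mul, hAdef]
      field_simp
      ring
    have hNu : IsUnit (A t).det := isUnit_iff_ne_zero.mpr h1
    have hmul := key_mul (A t) hNu t htne h2
    rw [← hE] at hmul
    refine ⟨hmul, ?_⟩
    rw [Matrix.inv_eq_right_inv hmul]
    exact key_vec (A t) hNu t htne h2
  constructor
  · -- ε part
    have evU : ∀ᶠ t in l, IsUnit (Matrix.of fun j k => Real.exp (-t * d j k)).det := by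
      filter_upwards [evkey] with t ht
      exact Matrix.isUnit_det_of_right_inverse ht.1
    rw [hl, eventually_nhdsWithin_iff] at evU
    rcases Metric.eventually_nhds_iff.mp evU with ⟨ε, hε, hball⟩
    refine ⟨ε, hε, fun t ht1 ht2 => ?_⟩
    have : dist t 0 < ε := by
      rw [Real.dist_eq, sub_zero, abs_of_pos ht1]; exact ht2
    exact hball this ht1
  · -- limit part
    have hlim : Tendsto (fun t => (t + c t)⁻¹ • ((A t)⁻¹ *ᵥ fun _ => (1:ℝ))) l
        (nhds (S⁻¹ • (d⁻¹ *ᵥ fun _ => 1))) := by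
      have hv : Tendsto (fun t => (A t)⁻¹ *ᵥ (fun _ => (1:ℝ))) l
          (nhds ((-d)⁻¹ *ᵥ fun _ => 1)) :=
        ((continuous_id.matrix_mulVec continuous_const).continuousAt.tendsto).comp hAinv
      have hr : Tendsto (fun t => (t + c t)⁻¹) l (nhds (-S)⁻¹) := htc.inv₀ hSne
      have := hr.smul hv
      rw [hneg] at this
      simpa [Matrix.neg_mulVec, smul_neg, inv_neg, neg_smul] using this
    refine Tendsto.congr' ?_ hlim
    filter_upwards [evkey] with t ht
    exact ht.2.symm
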